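/- Consider the cylindrical hitomezashi pattern Cloth_{ℤ×(ℤ/Nℤ)}(x,y) restricted to the region a ≤ first coordinate ≤ b (a < b integers). Among the finitely many maximal directed hitomezashi paths in this restricted pattern whose endpoints lie on the lines {first coordinate = a} or {first coordinate = b}, the number of paths going from the line x = a to the line x = b minus the number going from x = b to x = a equals Σ(x) = ∑_{j ∈ ℤ/Nℤ} x_j. In particular, if Σ(x) ≠ 0, there exists a hitomezashi path with one endpoint on x = a and the other on x = b. -/

import Mathlib

/-- A legal directed horizontal step on the cylinder `ℤ × (ℤ/Nℤ)`. -/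
def CHStep (N : ℕ) (x : ZMod N → ℤ) (u w : ℤ × ZMod N) : Prop :=
  w.2 = u.2 ∧ ((x u.2 = 1 ∧ w.1 = u.1 + 1) ∨ (x u.2 = -1 ∧ w.1 = u.1 - 1))

/-- A legal directed vertical step on the cylinder `ℤ × (ℤ/Nℤ)`. -/
def CVStep (N : ℕ) (y : ℤ → ℤ) (u w : ℤ × ZMod N) : Prop :=
  w.1 = u.1 ∧ ((y u.1 = 1 ∧ w.2 = u.2 + 1) ∨ (y u.1 = -1 ∧ w.2 = u.2 - 1))

/-- The (undirected) edge used by a step `u → w` on the cylinder. -/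
def cedge (N : ℕ) (x : ZMod N → ℤ) (y : ℤ → ℤ) (u w : ℤ × ZMod N) :
    (ℤ × ZMod N) ⊕ (ℤ × ZMod N) :=
  if w.2 = u.2 then Sum.inl (if x u.2 = 1 then u else w)
  else Sum.inr (if y u.1 = 1 then u else w)

/-- A cylindrical hitomezashi loop: a closed directed circuit which follows the
orientation, alternates between horizontal and vertical steps, and does not
repeat edges. -/
structure CylLoop (N : ℕ) (x : ZMod N → ℤ) (y : ℤ → ℤ) where
  len : ℕ
  len_pos : 0 < len
  v : ZMod len → ℤ × ZMod N
  step : ∀ k, CHStep N x (v k) (v (k + 1)) ∨ CVStep N y (v k) (v (k + 1))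
  alt : ∀ k, CHStep N x (v k) (v (k + 1)) ↔ CVStep N y (v (k + 1)) (v (k + 2))
  inj : Function.Injective (fun k => cedge N x y (v k) (v (k + 1)))

/-- `Δy` of a cylindrical loop: upward edges minus downward edges.
The homology class of the loop is `Δy / N`. -/
def CylLoop.dy {N : ℕ} {x : ZMod N → ℤ} {y : ℤ → ℤ} (L : CylLoop N x y) : ℤ :=
  haveI : NeZero L.len := ⟨L.len_pos.ne'⟩
  ∑ k : ZMod L.len, if (L.v (k + 1)).1 = (L.v k).1 then y ((L.v k).1) else 0

/-- A directed hitomezashi path in the cylindrical pattern restricted to the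
strip `a ≤ first coordinate ≤ b`. The vertex sequence is normalized to be
constant after index `len`, so that a path is determined by its data. -/
structure StripPath (N : ℕ) (x : ZMod N → ℤ) (y : ℤ → ℤ) (a b : ℤ) where
  len : ℕ
  v : ℕ → ℤ × ZMod N
  instrip : ∀ k ≤ len, a ≤ (v k).1 ∧ (v k).1 ≤ b
  step : ∀ k < len, CHStep N x (v k) (v (k + 1)) ∨ CVStep N y (v k) (v (k + 1))
  alt : ∀ k, k + 1 < len →
    (CHStep N x (v k) (v (k + 1)) ↔ CVStep N y (v (k + 1)) (v (k + 2)))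
  norm : ∀ k, len ≤ k → v k = v len

/-- A strip path is maximal if it cannot be extended at either end within the strip. -/
def StripPath.Maximal {N : ℕ} {x : ZMod N → ℤ} {y : ℤ → ℤ} {a b : ℤ}
    (p : StripPath N x y a b) : Prop :=
  (¬∃ w : ℤ × ZMod N, a ≤ w.1 ∧ w.1 ≤ b ∧
      (CHStep N x (p.v p.len) w ∨ CVStep N y (p.v p.len) w) ∧
      (p.len = 0 ∨
        (CHStep N x (p.v (p.len - 1)) (p.v p.len) ↔ CVStep N y (p.v p.len) w))) ∧
  (¬∃ u : ℤ × ZMod N, a ≤ u.1 ∧ u.1 ≤ b ∧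
      (CHStep N x u (p.v 0) ∨ CVStep N y u (p.v 0)) ∧
      (p.len = 0 ∨
        (CHStep N x u (p.v 0) ↔ CVStep N y (p.v 0) (p.v 1))))

section Hito

variable (N : ℕ) [NeZero N] (x : ZMod N → ℤ) (y : ℤ → ℤ) (a b : ℤ)

/-- horizontal successor -/
def Hnext (u : ℤ × ZMod N) : ℤ × ZMod N := (u.1 + x u.2, u.2)
/-- horizontal predecessor -/
def Hprev (u : ℤ × ZMod N) : ℤ × ZMod N := (u.1 - x u.2, u.2)
/-- vertical successor -/
def Vnext (u : ℤ × ZMod N) : ℤ × ZMod N := (u.1, u.2 + (y u.1 : ZMod N))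
/-- vertical predecessor -/
def Vprev (u : ℤ × ZMod N) : ℤ × ZMod N := (u.1, u.2 - (y u.1 : ZMod N))

/-- state transition: `true` means the next step is horizontal -/
def Fstep (s : (ℤ × ZMod N) × Bool) : (ℤ × ZMod N) × Bool :=
  if s.2 then (Hnext N x s.1, false) else (Vnext N y s.1, true)

/-- inverse state transition -/
def Gstep (s : (ℤ × ZMod N) × Bool) : (ℤ × ZMod N) × Bool :=
  if s.2 then (Vprev N y s.1, false) else (Hprev N x s.1, true)

/-- in the strip -/
def InS (u : ℤ × ZMod N) : Prop := a ≤ u.1 ∧ u.1 ≤ b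

/-- exit state: next step is horizontal and leaves the strip -/
def Ex (s : (ℤ × ZMod N) × Bool) : Prop :=
  s.2 = true ∧ ¬ InS N a b (Hnext N x s.1)

variable {N x y a b}

set_option linter.unusedSectionVars false

lemma CH_iff (hx : ∀ j, x j = 1 ∨ x j = -1) (u w : ℤ × ZMod N) : CHStep N x u w ↔ w = Hnext N x u := by
  constructor
  · rintro ⟨h2, ⟨hx1, h1⟩ | ⟨hx1, h1⟩⟩ <;>
      simp [Hnext, Prod.ext_iff, h1, h2, hx1] <;> ring
  · rintro rfl
    rcases hx u.2 with h | h
    · exact ⟨rfl, Or.inl ⟨h, by simp [Hnext, h]⟩⟩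
    · exact ⟨rfl, Or.inr ⟨h, by simp [Hnext, h, sub_eq_add_neg]⟩⟩

lemma CV_iff (hy : ∀ i, y i = 1 ∨ y i = -1) (u w : ℤ × ZMod N) : CVStep N y u w ↔ w = Vnext N y u := by
  constructor
  · rintro ⟨h1, ⟨hy1, h2⟩ | ⟨hy1, h2⟩⟩ <;>
      simp [Vnext, Prod.ext_iff, h1, h2, hy1] <;> push_cast <;> ring
  · rintro rfl
    rcases hy u.1 with h | h
    · exact ⟨rfl, Or.inl ⟨h, by simp [Vnext, h]⟩⟩
    · exact ⟨rfl, Or.inr ⟨h, by simp [Vnext, h, sub_eq_add_neg]⟩⟩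

lemma CH_prev {u w : ℤ × ZMod N} (h : CHStep N x u w) : u = Hprev N x w := by
  obtain ⟨h2, ⟨hx1, h1⟩ | ⟨hx1, h1⟩⟩ := h <;>
    simp [Hprev, Prod.ext_iff, h1, h2, hx1] <;> ring

lemma CV_prev {u w : ℤ × ZMod N} (h : CVStep N y u w) : u = Vprev N y w := by
  obtain ⟨h1, ⟨hy1, h2⟩ | ⟨hy1, h2⟩⟩ := h <;>
    simp [Vprev, Prod.ext_iff, h1, h2, hy1] <;> push_cast <;> ring

lemma CH_of_prev (hx : ∀ j, x j = 1 ∨ x j = -1) (w : ℤ × ZMod N) : CHStep N x (Hprev N x w) w := by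
  rw [CH_iff hx]
  simp [Hnext, Hprev]

lemma CV_of_prev (hy : ∀ i, y i = 1 ∨ y i = -1) (w : ℤ × ZMod N) : CVStep N y (Vprev N y w) w := by
  rw [CV_iff hy]
  simp [Vnext, Vprev]

lemma CH_fst {u w : ℤ × ZMod N} (h : CHStep N x u w) : w.1 = u.1 + 1 ∨ w.1 = u.1 - 1 := by
  obtain ⟨-, ⟨-, h1⟩ | ⟨-, h1⟩⟩ := h
  · exact Or.inl h1
  · exact Or.inr h1

lemma not_CH_and_CV {u w : ℤ × ZMod N} (h : CHStep N x u w) (h' : CVStep N y u w) : False := by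
  have h2 := h'.1
  rcases CH_fst h with h1 | h1 <;> omega

lemma GF (s : (ℤ × ZMod N) × Bool) : Gstep N x y (Fstep N x y s) = s := by
  obtain ⟨u, _ | _⟩ := s <;>
    simp [Fstep, Gstep, Hnext, Hprev, Vnext, Vprev]

lemma Fstep_iterate_cancel {k : ℕ} {s t : (ℤ × ZMod N) × Bool}
    (h : (Fstep N x y)^[k] s = (Fstep N x y)^[k] t) : s = t := by
  induction k with
  | zero => exact h
  | succ n ih =>
    rw [Function.iterate_succ_apply', Function.iterate_succ_apply'] at h
    have := congrArg (Gstep N x y) h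
    rw [GF, GF] at this
    exact ih this

lemma Fstep_snd (s : (ℤ × ZMod N) × Bool) : (Fstep N x y s).2 = !s.2 := by
  obtain ⟨u, _ | _⟩ := s <;> simp [Fstep]

lemma Fstep_iterate_snd (u : ℤ × ZMod N) (k : ℕ) :
    ((Fstep N x y)^[k] (u, false)).2 = decide (k % 2 = 1) := by
  induction k with
  | zero => simp
  | succ n ih =>
    rw [Function.iterate_succ_apply', Fstep_snd, ih]
    rcases Nat.mod_two_eq_zero_or_one n with h | h <;> simp [h, Nat.succ_mod_two_eq_one_iff] <;> omega

/-- a starting vertex: in the strip, and its horizontal predecessor is out -/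
def IsStart (u : ℤ × ZMod N) : Prop := InS N a b u ∧ ¬ InS N a b (Hprev N x u)

lemma isStart_iff (hab : a ≤ b) (hx : ∀ j, x j = 1 ∨ x j = -1) (u : ℤ × ZMod N) :
    IsStart (a := a) (b := b) (x := x) u ↔
      ((u.1 = a ∧ x u.2 = 1) ∨ (u.1 = b ∧ x u.2 = -1)) := by
  unfold IsStart InS Hprev
  rcases hx u.2 with h | h <;> simp [h] <;> omega

lemma isEnd_iff (hx : ∀ j, x j = 1 ∨ x j = -1) (u : ℤ × ZMod N)
    (hu : InS N a b u) :
    ¬ InS N a b (Hnext N x u) ↔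
      ((u.1 = b ∧ x u.2 = 1) ∨ (u.1 = a ∧ x u.2 = -1)) := by
  unfold InS Hnext
  unfold InS at hu
  rcases hx u.2 with h | h <;> simp [h] <;> omega

/-- iterates of a start state stay in the strip until an exit state -/
lemma instrip_until {u : ℤ × ZMod N} (hu : InS N a b u) (k : ℕ)
    (h : ∀ j < k, ¬ Ex N x a b ((Fstep N x y)^[j] (u, false))) :
    InS N a b ((Fstep N x y)^[k] (u, false)).1 := by
  induction k with
  | zero => exact hu
  | succ n ih =>
    have hn := ih (fun j hj => h j (by omega))
    have hne := h n (by omega)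
    rw [Function.iterate_succ_apply']
    set s := (Fstep N x y)^[n] (u, false) with hs
    obtain ⟨v, bb⟩ := s
    cases bb with
    | false => simpa [Fstep, Vnext, InS] using hn
    | true =>
      simp only [Ex, not_and, not_not] at hne
      simpa [Fstep] using hne trivial

/-- existence of an exit time from a start state -/
lemma exists_exit {u : ℤ × ZMod N}
    (hu : IsStart (a := a) (b := b) (x := x) u) :
    ∃ k, Ex N x a b ((Fstep N x y)^[k] (u, false)) := by
  by_contra hcon
  push_neg at hcon
  -- all iterates lie in a finite set
  have hfin : (({p : ℤ × ZMod N | a ≤ p.1 ∧ p.1 ≤ b} ×ˢ (Set.univ : Set Bool))).Finite := by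
    apply Set.Finite.prod _ (Set.finite_univ)
    have : {p : ℤ × ZMod N | a ≤ p.1 ∧ p.1 ≤ b} ⊆ (Set.Icc a b) ×ˢ (Set.univ : Set (ZMod N)) := by
      rintro ⟨i, j⟩ ⟨h1, h2⟩
      exact ⟨⟨h1, h2⟩, trivial⟩
    exact Set.Finite.subset (Set.Finite.prod (Set.finite_Icc a b) Set.finite_univ) this
  have hmap : Set.MapsTo (fun k => (Fstep N x y)^[k] (u, false)) (Set.univ : Set ℕ)
      ({p : ℤ × ZMod N | a ≤ p.1 ∧ p.1 ≤ b} ×ˢ (Set.univ : Set Bool)) := by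
    intro k _
    exact ⟨instrip_until hu.1 k (fun j _ => hcon j), trivial⟩
  obtain ⟨k, -, l, -, hkl, he⟩ :=
    Set.Infinite.exists_ne_map_eq_of_mapsTo Set.infinite_univ hmap hfin
  -- wlog k < l
  wlog hlt : k < l generalizing k l
  · exact this l k hkl.symm he.symm (by omega)
  -- then F^[l-k] (u,false) = (u,false)
  have hper : (Fstep N x y)^[l - k] (u, false) = (u, false) := by
    apply Fstep_iterate_cancel (k := k)
    rw [← Function.iterate_add_apply]
    rw [Nat.add_sub_cancel' hlt.le]
    exact he.symm
  have hm : 1 ≤ l - k := by omega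
  -- predecessor of (u,false) is in the strip : contradiction
  have h1 : (Fstep N x y)^[l - k - 1 + 1] (u, false) = (u, false) := by
    rwa [Nat.sub_add_cancel hm]
  rw [Function.iterate_succ_apply'] at h1
  set t := (Fstep N x y)^[l - k - 1] (u, false) with ht
  have htin : InS N a b t.1 := instrip_until hu.1 _ (fun j _ => hcon j)
  -- t = Gstep (u,false) = (Hprev u, true)
  have : t = Gstep N x y (u, false) := by rw [← h1, GF]
  rw [this] at htin
  simp only [Gstep] at htin
  simp at htin
  exact hu.2 htin

variable (N x y) in
/-- vertex sequence of the deterministic trajectory from `u` (starting vertically) -/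
def W (u : ℤ × ZMod N) (k : ℕ) : ℤ × ZMod N := ((Fstep N x y)^[k] (u, false)).1

lemma W_state (u : ℤ × ZMod N) (k : ℕ) :
    (Fstep N x y)^[k] (u, false) = (W N x y u k, decide (k % 2 = 1)) := by
  rw [← Fstep_iterate_snd (x := x) (y := y) u k]
  rfl

lemma W_even {u : ℤ × ZMod N} {k : ℕ} (h : k % 2 = 0) :
    W N x y u (k + 1) = Vnext N y (W N x y u k) := by
  unfold W
  rw [Function.iterate_succ_apply', W_state]
  simp [Fstep, h]

lemma W_odd {u : ℤ × ZMod N} {k : ℕ} (h : k % 2 = 1) :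
    W N x y u (k + 1) = Hnext N x (W N x y u k) := by
  unfold W
  rw [Function.iterate_succ_apply', W_state]
  simp [Fstep, h]

variable (y) in
/-- the exit time of the trajectory from a start vertex -/
noncomputable def exitTime {u : ℤ × ZMod N}
    (hu : IsStart (a := a) (b := b) (x := x) u) : ℕ :=
  @Nat.find _ (Classical.decPred _) (exists_exit (y := y) hu)

lemma exitTime_spec {u : ℤ × ZMod N} (hu : IsStart (a := a) (b := b) (x := x) u) :
    Ex N x a b ((Fstep N x y)^[exitTime y hu] (u, false)) :=
  @Nat.find_spec _ (Classical.decPred _) (exists_exit (y := y) hu)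

lemma exitTime_min {u : ℤ × ZMod N} (hu : IsStart (a := a) (b := b) (x := x) u)
    {k : ℕ} (hk : k < exitTime y hu) : ¬ Ex N x a b ((Fstep N x y)^[k] (u, false)) :=
  @Nat.find_min _ (Classical.decPred _) (exists_exit (y := y) hu) _ hk

lemma exitTime_odd {u : ℤ × ZMod N} (hu : IsStart (a := a) (b := b) (x := x) u) :
    (exitTime y hu) % 2 = 1 := by
  have h := (exitTime_spec (y := y) hu).1
  rw [W_state] at h
  simpa using h

lemma exitTime_pos {u : ℤ × ZMod N} (hu : IsStart (a := a) (b := b) (x := x) u) :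
    0 < exitTime y hu := by
  have := exitTime_odd (y := y) hu
  omega

lemma W_instrip {u : ℤ × ZMod N} (hu : IsStart (a := a) (b := b) (x := x) u)
    {k : ℕ} (hk : k ≤ exitTime y hu) : InS N a b (W N x y u k) := by
  apply instrip_until hu.1
  intro j hj
  exact exitTime_min (y := y) hu (by omega)

/-- The canonical maximal path starting at a start vertex `u`. -/
noncomputable def mkPath (hx : ∀ j, x j = 1 ∨ x j = -1) (hy : ∀ i, y i = 1 ∨ y i = -1)
    {u : ℤ × ZMod N} (hu : IsStart (a := a) (b := b) (x := x) u) :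
    StripPath N x y a b where
  len := exitTime y hu
  v := fun k => W N x y u (min k (exitTime y hu))
  instrip := by
    intro k hk
    rw [min_eq_left hk]
    exact W_instrip hu hk
  step := by
    intro k hk
    rw [min_eq_left hk.le, min_eq_left (by omega : k + 1 ≤ _)]
    rcases Nat.mod_two_eq_zero_or_one k with h | h
    · exact Or.inr (by rw [CV_iff hy]; exact W_even h)
    · exact Or.inl (by rw [CH_iff hx]; exact W_odd h)
  alt := by
    intro k hk
    rw [min_eq_left (by omega : k ≤ _), min_eq_left (by omega : k + 1 ≤ _),
      min_eq_left (by omega : k + 2 ≤ _)]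
    rcases Nat.mod_two_eq_zero_or_one k with h | h
    · constructor
      · intro hch
        exact absurd hch (by
          intro hch
          exact not_CH_and_CV hch (by rw [CV_iff hy]; exact W_even h))
      · intro hcv
        exact absurd hcv (by
          intro hcv
          exact not_CH_and_CV (by rw [CH_iff hx]; exact W_odd (by omega)) hcv)
    · constructor
      · intro _
        rw [CV_iff hy]
        exact W_even (by omega)
      · intro _
        rw [CH_iff hx]
        exact W_odd h
  norm := by
    intro k hk
    rw [min_eq_left le_rfl, min_eq_right hk]

lemma mkPath_v {hx : ∀ j, x j = 1 ∨ x j = -1} {hy : ∀ i, y i = 1 ∨ y i = -1}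
    {u : ℤ × ZMod N} (hu : IsStart (a := a) (b := b) (x := x) u)
    {k : ℕ} (hk : k ≤ exitTime y hu) :
    (mkPath hx hy hu).v k = W N x y u k := by
  simp only [mkPath, min_eq_left hk]

lemma mkPath_v0 {hx : ∀ j, x j = 1 ∨ x j = -1} {hy : ∀ i, y i = 1 ∨ y i = -1}
    {u : ℤ × ZMod N} (hu : IsStart (a := a) (b := b) (x := x) u) :
    (mkPath hx hy hu).v 0 = u := by
  rw [mkPath_v hu (Nat.zero_le _)]
  rfl

lemma mkPath_len {hx : ∀ j, x j = 1 ∨ x j = -1} {hy : ∀ i, y i = 1 ∨ y i = -1}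
    {u : ℤ × ZMod N} (hu : IsStart (a := a) (b := b) (x := x) u) :
    (mkPath hx hy hu).len = exitTime y hu := rfl

lemma mkPath_maximal {hx : ∀ j, x j = 1 ∨ x j = -1} {hy : ∀ i, y i = 1 ∨ y i = -1}
    {u : ℤ × ZMod N} (hu : IsStart (a := a) (b := b) (x := x) u) :
    (mkPath hx hy hu).Maximal := by
  have hKodd : exitTime y hu % 2 = 1 := exitTime_odd (y := y) hu
  have hKpos : 0 < exitTime y hu := exitTime_pos (y := y) hu
  have hlen : (mkPath hx hy hu).len = exitTime y hu := rfl
  constructor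
  · rintro ⟨w, hw1, hw2, hw3, hw4⟩
    rw [hlen] at hw3 hw4
    rcases hw4 with h0 | hiff
    · omega
    · -- last step (index K-1, even) is vertical
      have hlast : CVStep N y ((mkPath hx hy hu).v (exitTime y hu - 1))
          ((mkPath hx hy hu).v (exitTime y hu)) := by
        rw [mkPath_v hu (by omega), mkPath_v hu le_rfl, CV_iff hy]
        have h1 : exitTime y hu - 1 + 1 = exitTime y hu := by omega
        rw [← h1]
        exact W_even (by omega)
      have hnotch : ¬ CHStep N x ((mkPath hx hy hu).v (exitTime y hu - 1))
          ((mkPath hx hy hu).v (exitTime y hu)) :=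
        fun h => not_CH_and_CV h hlast
      -- so CV (v K) w fails, hence CH (v K) w, hence w = Hnext (v K) which is out of strip
      have hcv : ¬ CVStep N y ((mkPath hx hy hu).v (exitTime y hu)) w :=
        fun h => hnotch (hiff.mpr h)
      have hch : CHStep N x ((mkPath hx hy hu).v (exitTime y hu)) w := hw3.resolve_right hcv
      rw [mkPath_v hu le_rfl] at hch
      rw [CH_iff hx] at hch
      have hex := (exitTime_spec (y := y) hu).2
      rw [W_state] at hex
      apply hex
      dsimp only
      rw [← hch]
      exact ⟨hw1, hw2⟩
  · rintro ⟨w, hw1, hw2, hw3, hw4⟩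
    rw [hlen] at hw4
    rcases hw4 with h0 | hiff
    · omega
    · -- first step is vertical
      have hfirst : CVStep N y ((mkPath hx hy hu).v 0) ((mkPath hx hy hu).v 1) := by
        rw [mkPath_v hu (Nat.zero_le _), mkPath_v hu (by omega : 1 ≤ exitTime y hu), CV_iff hy]
        exact W_even (by omega)
      have hch : CHStep N x w ((mkPath hx hy hu).v 0) := hiff.mpr hfirst
      have hw : w = Hprev N x ((mkPath hx hy hu).v 0) := CH_prev hch
      rw [mkPath_v0 hu] at hw
      subst hw
      exact hu.2 ⟨hw1, hw2⟩

lemma StripPath.ext' {p q : StripPath N x y a b} (h1 : p.len = q.len) (h2 : p.v = q.v) :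
    p = q := by
  cases p
  cases q
  cases h1
  cases h2
  rfl

section MaxPath

variable {p : StripPath N x y a b}
variable (hx : ∀ j, x j = 1 ∨ x j = -1) (hy : ∀ i, y i = 1 ∨ y i = -1)
variable (hp : p.Maximal)

include hx hy hp

lemma max_len_pos : 0 < p.len := by
  rcases Nat.eq_zero_or_pos p.len with h0 | h; swap
  · exact h
  exfalso
  apply hp.1
  refine ⟨Vnext N y (p.v p.len), ?_, ?_, Or.inr ((CV_iff hy _ _).mpr rfl), Or.inl h0⟩
  · exact (p.instrip p.len le_rfl).1
  · exact (p.instrip p.len le_rfl).2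

lemma max_parity : ∀ k < p.len,
    (k % 2 = 0 → CVStep N y (p.v k) (p.v (k + 1)) ∧ ¬ CHStep N x (p.v k) (p.v (k + 1))) ∧
    (k % 2 = 1 → CHStep N x (p.v k) (p.v (k + 1)) ∧ ¬ CVStep N y (p.v k) (p.v (k + 1))) := by
  have hpos := max_len_pos hx hy hp
  -- first step is vertical
  have h0 : CVStep N y (p.v 0) (p.v 1) := by
    rcases p.step 0 hpos with hch | hcv; swap
    · exact hcv
    exfalso
    apply hp.2
    refine ⟨Vprev N y (p.v 0), (p.instrip 0 (by omega)).1, (p.instrip 0 (by omega)).2,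
      Or.inr (CV_of_prev hy _), Or.inr ?_⟩
    constructor
    · intro hch'
      exfalso
      rcases CH_fst hch' with h | h <;> simp [Vprev] at h <;> omega
    · intro hcv'
      exact absurd hch (fun h => not_CH_and_CV h hcv')
  intro k
  induction k with
  | zero =>
    intro hk
    refine ⟨fun _ => ⟨h0, fun h => not_CH_and_CV h h0⟩, by omega⟩
  | succ n ih =>
    intro hk
    have hn := ih (by omega)
    have halt := p.alt n hk
    have hstep := p.step (n + 1) hk
    rcases Nat.mod_two_eq_zero_or_one n with hpar | hpar
    · -- n even, step n is CV hence ¬CH n hence ¬CV (n+1) hence CH (n+1)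
      have hncv := (hn.1 hpar).2
      have : ¬ CVStep N y (p.v (n + 1)) (p.v (n + 2)) := fun h => hncv (halt.mpr h)
      refine ⟨by omega, fun _ => ⟨hstep.resolve_right this, this⟩⟩
    · have hch := (hn.2 hpar).1
      have hcv : CVStep N y (p.v (n + 1)) (p.v (n + 2)) := halt.mp hch
      refine ⟨fun _ => ⟨hcv, fun h => not_CH_and_CV h hcv⟩, by omega⟩

lemma max_state : ∀ k ≤ p.len,
    (Fstep N x y)^[k] (p.v 0, false) = (p.v k, decide (k % 2 = 1)) := by
  intro k
  induction k with
  | zero => simp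
  | succ n ih =>
    intro hk
    have hn := ih (by omega)
    rw [Function.iterate_succ_apply', hn]
    have hpar := max_parity hx hy hp n (by omega)
    rcases Nat.mod_two_eq_zero_or_one n with h | h
    · have hcv := (hpar.1 h).1
      rw [CV_iff hy] at hcv
      simp [Fstep, h, hcv, Nat.succ_mod_two_eq_one_iff]
    · have hch := (hpar.2 h).1
      rw [CH_iff hx] at hch
      simp [Fstep, h, hch, Nat.succ_mod_two_eq_one_iff]

lemma max_len_odd : p.len % 2 = 1 := by
  have hpos := max_len_pos hx hy hp
  rcases Nat.mod_two_eq_zero_or_one p.len with h | h; swap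
  · exact h
  exfalso
  -- then the last step (index len - 1) is horizontal; extend vertically
  have hlast := (max_parity hx hy hp (p.len - 1) (by omega)).2 (by omega)
  apply hp.1
  refine ⟨Vnext N y (p.v p.len), (p.instrip p.len le_rfl).1, (p.instrip p.len le_rfl).2,
    Or.inr ((CV_iff hy _ _).mpr rfl), Or.inr ?_⟩
  have h1 : p.len - 1 + 1 = p.len := by omega
  rw [h1] at hlast
  constructor
  · intro _
    exact (CV_iff hy _ _).mpr rfl
  · intro _
    exact hlast.1

lemma max_isStart : IsStart (a := a) (b := b) (x := x) (p.v 0) := by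
  have hpos := max_len_pos hx hy hp
  refine ⟨⟨(p.instrip 0 (by omega)).1, (p.instrip 0 (by omega)).2⟩, ?_⟩
  intro hin
  apply hp.2
  refine ⟨Hprev N x (p.v 0), hin.1, hin.2, Or.inl (CH_of_prev hx _), Or.inr ?_⟩
  have h0 := (max_parity hx hy hp 0 hpos).1 rfl
  constructor
  · intro _
    exact h0.1
  · intro _
    exact CH_of_prev hx _

lemma max_exit : Ex N x a b ((Fstep N x y)^[p.len] (p.v 0, false)) := by
  have hpos := max_len_pos hx hy hp
  have hodd := max_len_odd hx hy hp
  rw [max_state hx hy hp p.len le_rfl]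
  refine ⟨by simpa using hodd, ?_⟩
  intro hin
  apply hp.1
  refine ⟨Hnext N x (p.v p.len), hin.1, hin.2, Or.inl ((CH_iff hx _ _).mpr rfl), Or.inr ?_⟩
  have hlast := (max_parity hx hy hp (p.len - 1) (by omega)).1 (by omega)
  have h1 : p.len - 1 + 1 = p.len := by omega
  rw [h1] at hlast
  constructor
  · intro hch
    exact absurd hch hlast.2
  · intro hcv
    exfalso
    exact not_CH_and_CV ((CH_iff hx _ _).mpr rfl) hcv

lemma max_not_exit {k : ℕ} (hk : k < p.len) :
    ¬ Ex N x a b ((Fstep N x y)^[k] (p.v 0, false)) := by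
  rw [max_state hx hy hp k hk.le]
  rintro ⟨hb, hout⟩
  simp only at hb
  have hodd : k % 2 = 1 := by simpa using hb
  have hch := ((max_parity hx hy hp k hk).2 hodd).1
  rw [CH_iff hx] at hch
  apply hout
  dsimp only
  rw [← hch]
  exact ⟨(p.instrip (k+1) hk).1, (p.instrip (k+1) hk).2⟩

lemma max_exitTime : exitTime y (max_isStart hx hy hp) = p.len := by
  apply le_antisymm
  · exact @Nat.find_le _ _ (Classical.decPred _) _ (max_exit hx hy hp)
  · by_contra hlt
    push_neg at hlt
    exact max_not_exit hx hy hp hlt (exitTime_spec (y := y) (max_isStart hx hy hp))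

lemma max_eq_mkPath : p = mkPath hx hy (max_isStart hx hy hp) := by
  have hK := max_exitTime hx hy hp
  apply StripPath.ext'
  · rw [mkPath_len, hK]
  · funext k
    rcases le_or_gt k p.len with hk | hk
    · rw [mkPath_v _ (by omega)]
      have := max_state hx hy hp k hk
      unfold W
      rw [this]
    · rw [p.norm k hk.le, (mkPath hx hy (max_isStart hx hy hp)).norm k (by rw [mkPath_len]; omega),
        mkPath_len, hK, mkPath_v _ (by omega)]
      have := max_state hx hy hp p.len le_rfl
      unfold W
      rw [this]

end MaxPath

section Global

variable (hx : ∀ j, x j = 1 ∨ x j = -1) (hy : ∀ i, y i = 1 ∨ y i = -1)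
include hx hy

lemma mkPath_congr {u1 u2 : ℤ × ZMod N} (h : u1 = u2)
    (hu1 : IsStart (a := a) (b := b) (x := x) u1) (hu2 : IsStart (a := a) (b := b) (x := x) u2) :
    mkPath hx hy hu1 = mkPath hx hy hu2 := by
  subst h
  rfl

lemma start_inj {p q : StripPath N x y a b} (hp : p.Maximal) (hq : q.Maximal)
    (h : p.v 0 = q.v 0) : p = q := by
  rw [max_eq_mkPath hx hy hp, max_eq_mkPath hx hy hq]
  exact mkPath_congr hx hy h _ _

lemma end_inj_aux {p q : StripPath N x y a b} (hp : p.Maximal) (hq : q.Maximal)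
    (hle : p.len ≤ q.len) (h : p.v p.len = q.v q.len) : p = q := by
  have hsp := max_state hx hy hp p.len le_rfl
  have hsq := max_state hx hy hq q.len le_rfl
  have hop := max_len_odd hx hy hp
  have hoq := max_len_odd hx hy hq
  have hstates : (Fstep N x y)^[p.len] (p.v 0, false) = (Fstep N x y)^[q.len] (q.v 0, false) := by
    rw [hsp, hsq, h]
    simp [hop, hoq]
  have hq2 : (Fstep N x y)^[q.len] (q.v 0, false)
      = (Fstep N x y)^[p.len] ((Fstep N x y)^[q.len - p.len] (q.v 0, false)) := by
    rw [← Function.iterate_add_apply]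
    congr 1
    omega
  rw [hq2] at hstates
  have hcancel : (p.v 0, false) = (Fstep N x y)^[q.len - p.len] (q.v 0, false) :=
    Fstep_iterate_cancel hstates
  set m := q.len - p.len with hm
  rcases Nat.eq_zero_or_pos m with h0 | hmpos
  · rw [h0] at hcancel
    simp at hcancel
    exact start_inj hx hy hp hq hcancel
  · exfalso
    have h1 : (Fstep N x y)^[m - 1 + 1] (q.v 0, false) = (p.v 0, false) := by
      rw [Nat.sub_add_cancel hmpos]
      exact hcancel.symm
    rw [Function.iterate_succ_apply'] at h1
    have h2 : (Fstep N x y)^[m - 1] (q.v 0, false) = Gstep N x y (p.v 0, false) := by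
      rw [← h1, GF]
    have h3 := max_state hx hy hq (m - 1) (by omega)
    rw [h3] at h2
    have h4 : q.v (m - 1) = Hprev N x (p.v 0) := by
      have := congrArg Prod.fst h2
      simpa [Gstep] using this
    have h5 := q.instrip (m - 1) (by omega)
    rw [h4] at h5
    exact (max_isStart hx hy hp).2 ⟨h5.1, h5.2⟩

lemma end_inj {p q : StripPath N x y a b} (hp : p.Maximal) (hq : q.Maximal)
    (h : p.v p.len = q.v q.len) : p = q := by
  rcases le_total p.len q.len with hle | hle
  · exact end_inj_aux hx hy hp hq hle h
  · exact (end_inj_aux hx hy hq hp hle h.symm).symm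

variable (hab : a ≤ b)

omit hx hy in
/-- canonical start vertex in row `j` -/
def su (j : ZMod N) : ℤ × ZMod N := if x j = 1 then (a, j) else (b, j)

omit hy in
include hab in
lemma su_isStart (j : ZMod N) : IsStart (a := a) (b := b) (x := x) (su (x := x) (a := a) (b := b) j) := by
  rw [isStart_iff hab hx]
  unfold su
  rcases hx j with h | h <;> simp [h]

omit hx hy in
lemma su_snd (j : ZMod N) : (su (x := x) (a := a) (b := b) j).2 = j := by
  unfold su
  split <;> rfl

include hab in
/-- the canonical maximal path starting in row `j` -/
noncomputable def ep (j : ZMod N) : StripPath N x y a b :=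
  mkPath hx hy (su_isStart hx hab j)

include hab in
lemma ep_v0 (j : ZMod N) : (ep hx hy hab j).v 0 = su (x := x) (a := a) (b := b) j :=
  mkPath_v0 _

include hab in
lemma ep_inj : Function.Injective (ep (y := y) hx hy hab) := by
  intro i j h
  have := congrArg (fun p => (StripPath.v p 0).2) h
  simpa [ep_v0, su_snd] using this

include hab in
lemma maximal_iff_mem_range {p : StripPath N x y a b} :
    p.Maximal ↔ p ∈ Set.range (ep (y := y) hx hy hab) := by
  constructor
  · intro hp
    refine ⟨(p.v 0).2, ?_⟩
    have hs := max_isStart hx hy hp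
    have hvu : su (x := x) (a := a) (b := b) (p.v 0).2 = p.v 0 := by
      rw [isStart_iff (by omega) hx] at hs
      unfold su
      rcases hs with ⟨h1, h2⟩ | ⟨h1, h2⟩ <;> simp [h1, h2, Prod.ext_iff]
    apply start_inj hx hy (mkPath_maximal _) hp
    exact (mkPath_v0 _).trans hvu
  · rintro ⟨j, rfl⟩
    exact mkPath_maximal _

lemma max_end_dichot {p : StripPath N x y a b} (hp : p.Maximal) :
    ((p.v p.len).1 = b ∧ x (p.v p.len).2 = 1) ∨ ((p.v p.len).1 = a ∧ x (p.v p.len).2 = -1) := by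
  have h1 : InS N a b (p.v p.len) := ⟨(p.instrip _ le_rfl).1, (p.instrip _ le_rfl).2⟩
  have h2 := (max_exit hx hy hp).2
  rw [max_state hx hy hp p.len le_rfl] at h2
  exact (isEnd_iff hx _ h1).mp (by simpa using h2)

lemma max_end_fst {p : StripPath N x y a b} (hp : p.Maximal) :
    (p.v p.len).1 = if x (p.v p.len).2 = 1 then b else a := by
  rcases max_end_dichot hx hy hp with ⟨h1, h2⟩ | ⟨h1, h2⟩ <;> rw [h1, h2] <;> norm_num

include hab in
lemma max_start_dichot {p : StripPath N x y a b} (hp : p.Maximal) :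
    ((p.v 0).1 = a ∧ x (p.v 0).2 = 1) ∨ ((p.v 0).1 = b ∧ x (p.v 0).2 = -1) :=
  (isStart_iff hab hx _).mp (max_isStart hx hy hp)

include hab in
lemma endrow_inj :
    Function.Injective (fun j => ((ep (y := y) hx hy hab j).v (ep (y := y) hx hy hab j).len).2) := by
  intro i j h
  have hM : ∀ k, (ep (y := y) hx hy hab k).Maximal := fun k => mkPath_maximal _
  apply ep_inj hx hy hab
  apply end_inj hx hy (hM i) (hM j)
  dsimp only at h
  refine Prod.ext_iff.mpr ⟨?_, h⟩
  rw [max_end_fst hx hy (hM i), max_end_fst hx hy (hM j), h]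

end Global

theorem hito_count (N : ℕ) [NeZero N] (x : ZMod N → ℤ) (y : ℤ → ℤ)
    (hx : ∀ j, x j = 1 ∨ x j = -1)
    (hy : ∀ i, y i = 1 ∨ y i = -1)
    (hab2 : a < b) :
    {p : StripPath N x y a b |
        p.Maximal ∧ (p.v 0).1 = a ∧ (p.v p.len).1 = b}.Finite ∧
    {p : StripPath N x y a b |
        p.Maximal ∧ (p.v 0).1 = b ∧ (p.v p.len).1 = a}.Finite ∧
    (({p : StripPath N x y a b |
          p.Maximal ∧ (p.v 0).1 = a ∧ (p.v p.len).1 = b}.ncard : ℤ)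
        - ({p : StripPath N x y a b |
          p.Maximal ∧ (p.v 0).1 = b ∧ (p.v p.len).1 = a}.ncard : ℤ)
      = ∑ j, x j) ∧
    ((∑ j, x j) ≠ 0 → ∃ p : StripPath N x y a b, p.Maximal ∧
      (((p.v 0).1 = a ∧ (p.v p.len).1 = b) ∨ ((p.v 0).1 = b ∧ (p.v p.len).1 = a))) := by
  classical
  have hab : a ≤ b := hab2.le
  set E : ZMod N → StripPath N x y a b := ep (y := y) hx hy hab with hE
  set τ : ZMod N → ZMod N := fun j => ((E j).v (E j).len).2 with hτ
  have hM : ∀ j, (E j).Maximal := fun j => mkPath_maximal _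
  have hτinj : Function.Injective τ := endrow_inj hx hy hab
  have hτsurj : Function.Surjective τ := Finite.injective_iff_surjective.mp hτinj
  have hv0 : ∀ j, (E j).v 0 = su (x := x) (a := a) (b := b) j := fun j => ep_v0 hx hy hab j
  -- membership characterizations
  have hAeq : {p : StripPath N x y a b | p.Maximal ∧ (p.v 0).1 = a ∧ (p.v p.len).1 = b}
      = E '' ↑(Finset.univ.filter (fun j => x j = 1 ∧ x (τ j) = 1)) := by
    ext p
    simp only [Set.mem_setOf_eq, Set.mem_image, Finset.coe_filter, Finset.mem_univ,
      true_and, Set.mem_setOf_eq]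
    constructor
    · rintro ⟨hp, h0, hL⟩
      obtain ⟨j, rfl⟩ := (maximal_iff_mem_range hx hy hab).mp hp
      refine ⟨j, ⟨?_, ?_⟩, rfl⟩
      · by_contra hxj
        have hxj' : x j = -1 := (hx j).resolve_left hxj
        rw [hv0 j] at h0
        unfold su at h0
        rw [if_neg (by rw [hxj']; norm_num)] at h0
        simp at h0
        omega
      · by_contra hxe
        have h2 := max_end_fst hx hy (hM j)
        rw [if_neg hxe] at h2
        rw [hL] at h2
        omega
    · rintro ⟨j, ⟨hj1, hj2⟩, rfl⟩
      refine ⟨hM j, ?_, ?_⟩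
      · rw [hv0 j]
        unfold su
        rw [if_pos hj1]
      · rw [max_end_fst hx hy (hM j), if_pos hj2]
  have hBeq : {p : StripPath N x y a b | p.Maximal ∧ (p.v 0).1 = b ∧ (p.v p.len).1 = a}
      = E '' ↑(Finset.univ.filter (fun j => ¬ x j = 1 ∧ ¬ x (τ j) = 1)) := by
    ext p
    simp only [Set.mem_setOf_eq, Set.mem_image, Finset.coe_filter, Finset.mem_univ,
      true_and, Set.mem_setOf_eq]
    constructor
    · rintro ⟨hp, h0, hL⟩
      obtain ⟨j, rfl⟩ := (maximal_iff_mem_range hx hy hab).mp hp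
      refine ⟨j, ⟨?_, ?_⟩, rfl⟩
      · intro hxj
        rw [hv0 j] at h0
        unfold su at h0
        rw [if_pos hxj] at h0
        simp at h0
        omega
      · intro hxe
        have h2 := max_end_fst hx hy (hM j)
        rw [if_pos hxe] at h2
        rw [hL] at h2
        omega
    · rintro ⟨j, ⟨hj1, hj2⟩, rfl⟩
      have hj1' : x j = -1 := (hx j).resolve_left hj1
      refine ⟨hM j, ?_, ?_⟩
      · rw [hv0 j]
        unfold su
        rw [if_neg (by rw [hj1']; norm_num)]
      · rw [max_end_fst hx hy (hM j), if_neg hj2]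
  have hEInj : Function.Injective E := ep_inj hx hy hab
  have hfinA : {p : StripPath N x y a b | p.Maximal ∧ (p.v 0).1 = a ∧ (p.v p.len).1 = b}.Finite := by
    rw [hAeq]; exact (Finset.finite_toSet _).image _
  have hfinB : {p : StripPath N x y a b | p.Maximal ∧ (p.v 0).1 = b ∧ (p.v p.len).1 = a}.Finite := by
    rw [hBeq]; exact (Finset.finite_toSet _).image _
  -- cardinalities
  have hcardA : {p : StripPath N x y a b | p.Maximal ∧ (p.v 0).1 = a ∧ (p.v p.len).1 = b}.ncard
      = (Finset.univ.filter (fun j => x j = 1 ∧ x (τ j) = 1)).card := by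
    rw [hAeq, Set.ncard_image_of_injective _ hEInj, Set.ncard_coe_finset]
  have hcardB : {p : StripPath N x y a b | p.Maximal ∧ (p.v 0).1 = b ∧ (p.v p.len).1 = a}.ncard
      = (Finset.univ.filter (fun j => ¬ x j = 1 ∧ ¬ x (τ j) = 1)).card := by
    rw [hBeq, Set.ncard_image_of_injective _ hEInj, Set.ncard_coe_finset]
  -- finset arithmetic
  set P : Finset (ZMod N) := Finset.univ.filter (fun j => x j = 1) with hP
  set Q : Finset (ZMod N) := Finset.univ.filter (fun j => x (τ j) = 1) with hQ
  have hPQ : Q.card = P.card := by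
    apply Finset.card_bij (fun j _ => τ j)
    · intro j hj
      rw [hQ] at hj
      rw [hP]
      simp only [Finset.mem_filter, Finset.mem_univ, true_and] at hj ⊢
      exact hj
    · intro i hi j hj h
      exact hτinj h
    · intro k hk
      obtain ⟨j, rfl⟩ := hτsurj k
      refine ⟨j, ?_, rfl⟩
      rw [hP] at hk
      rw [hQ]
      simp only [Finset.mem_filter, Finset.mem_univ, true_and] at hk ⊢
      exact hk
  have hF1 : Finset.univ.filter (fun j => x j = 1 ∧ x (τ j) = 1) = P ∩ Q := by
    rw [hP, hQ]
    ext j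
    simp [Finset.mem_filter]
  have hF2 : Finset.univ.filter (fun j => ¬ x j = 1 ∧ ¬ x (τ j) = 1) = (P ∪ Q)ᶜ := by
    rw [hP, hQ]
    ext j
    simp [Finset.mem_filter, not_or]
  have hunion : (P ∪ Q).card + (P ∩ Q).card = P.card + Q.card :=
    Finset.card_union_add_card_inter P Q
  have hcompl : (P ∪ Q)ᶜ.card = Fintype.card (ZMod N) - (P ∪ Q).card := by
    rw [Finset.card_compl]
  have hle : (P ∪ Q).card ≤ Fintype.card (ZMod N) := Finset.card_le_univ _
  -- the sum
  have hsum : ∑ j, x j = (P.card : ℤ) - ((Fintype.card (ZMod N) - P.card : ℕ) : ℤ) := by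
    have h1 : ∑ j, x j = ∑ j, (if x j = 1 then (1 : ℤ) else -1) := by
      apply Finset.sum_congr rfl
      intro j _
      rcases hx j with h | h <;> simp [h]
    rw [h1, Finset.sum_ite, Finset.sum_const, Finset.sum_const]
    have h2 : (Finset.univ.filter (fun j => ¬ x j = 1)).card
        = Fintype.card (ZMod N) - P.card := by
      rw [hP, ← Finset.card_univ]
      have := Finset.card_filter_add_card_filter_not
        (s := (Finset.univ : Finset (ZMod N))) (p := fun j => x j = 1)
      omega
    rw [h2, hP]
    simp
    ring
  -- conclude count identity
  have hcount : (({p : StripPath N x y a b |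
          p.Maximal ∧ (p.v 0).1 = a ∧ (p.v p.len).1 = b}.ncard : ℤ)
        - ({p : StripPath N x y a b |
          p.Maximal ∧ (p.v 0).1 = b ∧ (p.v p.len).1 = a}.ncard : ℤ)
      = ∑ j, x j) := by
    rw [hcardA, hcardB, hF1, hF2, hsum, hcompl]
    have hPc : P.card ≤ Fintype.card (ZMod N) := Finset.card_le_univ _
    omega
  refine ⟨hfinA, hfinB, hcount, ?_⟩
  intro hne
  rcases Set.eq_empty_or_nonempty
      {p : StripPath N x y a b | p.Maximal ∧ (p.v 0).1 = a ∧ (p.v p.len).1 = b} with hA0 | ⟨p, hpA⟩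
  · rcases Set.eq_empty_or_nonempty
        {p : StripPath N x y a b | p.Maximal ∧ (p.v 0).1 = b ∧ (p.v p.len).1 = a} with hB0 | ⟨p, hpB⟩
    · exfalso
      apply hne
      rw [← hcount, hA0, hB0]
      simp
    · exact ⟨p, hpB.1, Or.inr hpB.2⟩
  · exact ⟨p, hpA.1, Or.inl hpA.2⟩

end Hito

theorem stmt_14 (N : ℕ) [NeZero N] (x : ZMod N → ℤ) (y : ℤ → ℤ)
    (hx : ∀ j, x j = 1 ∨ x j = -1)
    (hy : ∀ i, y i = 1 ∨ y i = -1)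
    (a b : ℤ) (hab : a < b) :
    {p : StripPath N x y a b |
        p.Maximal ∧ (p.v 0).1 = a ∧ (p.v p.len).1 = b}.Finite ∧
    {p : StripPath N x y a b |
        p.Maximal ∧ (p.v 0).1 = b ∧ (p.v p.len).1 = a}.Finite ∧
    (({p : StripPath N x y a b |
          p.Maximal ∧ (p.v 0).1 = a ∧ (p.v p.len).1 = b}.ncard : ℤ)
        - ({p : StripPath N x y a b |
          p.Maximal ∧ (p.v 0).1 = b ∧ (p.v p.len).1 = a}.ncard : ℤ)
      = ∑ j, x j) ∧
    ((∑ j, x j) ≠ 0 → ∃ p : StripPath N x y a b, p.Maximal ∧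
      (((p.v 0).1 = a ∧ (p.v p.len).1 = b) ∨ ((p.v 0).1 = b ∧ (p.v p.len).1 = a))) := by
  exact hito_count N x y hx hy hab
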